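/- For a Giuga number n, the set of positive integers k such that ∑_{j=1}^{n-1} j^{k(n-1)} ≡ -1 (mod n) is exactly the set of positive multiples of λ(n)/gcd(λ(n), n-1). -/

import Mathlib

open Finset

/-- The Carmichael function: exponent of the unit group of `ZMod n`. -/
noncomputable def carmichael (n : ℕ) : ℕ := Monoid.exponent (ZMod n)ˣ

/-- `n` is composite. -/
def Composite (n : ℕ) : Prop := 2 ≤ n ∧ ¬ n.Prime

/-- `n` is a Giuga number. -/
def IsGiuga (n : ℕ) : Prop :=
  Composite n ∧ ∀ p : ℕ, p.Prime → p ∣ n → p ∣ (n / p - 1)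

private lemma giuga_squarefree {n : ℕ} (h2 : 2 ≤ n)
    (hg : ∀ p : ℕ, p.Prime → p ∣ n → p ∣ (n / p - 1)) : Squarefree n := by
  rw [Nat.squarefree_iff_prime_squarefree]
  intro p pp hpp
  have hpn : p ∣ n := (dvd_mul_right p p).trans hpp
  have h1 : p ∣ n / p := (Nat.dvd_div_iff_mul_dvd hpn).2 hpp
  have h2' : 1 ≤ n / p := Nat.one_le_div_iff pp.pos |>.2 (Nat.le_of_dvd (by omega) hpn)
  have h3 := Nat.dvd_sub h1 (hg p pp hpn)
  simp only [Nat.sub_sub_self h2'] at h3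
  exact pp.one_lt.ne' (Nat.dvd_one.mp h3)

private lemma squarefree_dvd_iff {n : ℕ} (hn : Squarefree n) (a : ℕ) :
    n ∣ a ↔ ∀ p ∈ n.primeFactors, p ∣ a := by
  constructor
  · intro h p hp
    exact (Nat.dvd_of_mem_primeFactors hp).trans h
  · intro h
    rw [← Nat.prod_primeFactors_of_squarefree hn]
    exact Finset.prod_primes_dvd a
      (fun p hp => (Nat.prime_of_mem_primeFactors hp).prime) h

private lemma sum_univ_pow (p m : ℕ) [Fact p.Prime] (hm : 0 < m) :
    ∑ x : ZMod p, x ^ m = if (p - 1) ∣ m then -1 else 0 := by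
  classical
  have hcard : Fintype.card (ZMod p) = p := ZMod.card p
  have h := FiniteField.sum_pow_units (ZMod p) m
  rw [hcard] at h
  rw [← h]
  let φ : (ZMod p)ˣ ↪ ZMod p := ⟨fun x ↦ x, fun _ _ h => Units.ext h⟩
  have huniv : univ.map φ = univ \ {0} := by
    ext x
    simp only [mem_map, mem_univ, Function.Embedding.coeFn_mk, true_and, mem_sdiff,
      mem_singleton, φ]
    exact isUnit_iff_ne_zero
  calc
    ∑ x : ZMod p, x ^ m = ∑ x ∈ univ \ {(0 : ZMod p)}, x ^ m := by
      rw [← sum_sdiff ({0} : Finset (ZMod p)).subset_univ, sum_singleton,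
        zero_pow hm.ne', add_zero]
    _ = ∑ x : (ZMod p)ˣ, (x : ZMod p) ^ m := by simp [φ, ← huniv, univ.sum_map φ]; rfl

private lemma sum_range_pow_eq_univ (p m : ℕ) [NeZero p] :
    ∑ j ∈ range p, ((j : ZMod p)) ^ m = ∑ x : ZMod p, x ^ m := by
  refine Finset.sum_nbij' (fun j => ((j : ZMod p))) (fun x => x.val) ?_ ?_ ?_ ?_ ?_
  · intro a _; exact mem_univ _
  · intro x _; exact mem_range.2 (ZMod.val_lt x)
  · intro a ha; exact ZMod.val_natCast_of_lt (mem_range.1 ha)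
  · intro x _; exact ZMod.natCast_zmod_val x
  · intro a _; rfl

private lemma sum_range_mul_pow (p m a : ℕ) [NeZero p] :
    ∑ j ∈ range (a * p), ((j : ZMod p)) ^ m
      = (a : ZMod p) * ∑ x ∈ range p, ((x : ZMod p)) ^ m := by
  induction a with
  | zero => simp
  | succ a ih =>
    have h1 : (a + 1) * p = a * p + p := by ring
    rw [h1, Finset.sum_range_add, ih]
    have h2 : ∀ i ∈ range p, ((a * p + i : ℕ) : ZMod p) ^ m = ((i : ZMod p)) ^ m := by
      intro i _
      push_cast
      rw [ZMod.natCast_self, mul_zero, zero_add]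
    rw [Finset.sum_congr rfl h2]
    push_cast
    ring

/-- The sum `∑_{j=1}^{n-1} j^m` modulo a prime factor `p` of a Giuga number. -/
private lemma sum_mod_prime {n p m : ℕ} (h2 : 2 ≤ n) (pp : p.Prime) (hpn : p ∣ n)
    (hm : 0 < m) (hgiuga : p ∣ (n / p - 1)) :
    ((∑ j ∈ Ico 1 n, (j : ZMod p) ^ m) = -1) ↔ (p - 1) ∣ m := by
  haveI : Fact p.Prime := ⟨pp⟩
  haveI : NeZero p := ⟨pp.pos.ne'⟩
  have hnp1 : 1 ≤ n / p := Nat.one_le_div_iff pp.pos |>.2 (Nat.le_of_dvd (by omega) hpn)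
  have hrange : ∑ j ∈ range n, (j : ZMod p) ^ m = ∑ j ∈ Ico 1 n, (j : ZMod p) ^ m := by
    rw [Finset.range_eq_Ico, Finset.sum_eq_sum_Ico_succ_bot (by omega : 0 < n)]
    simp [zero_pow hm.ne']
  have hn' : n / p * p = n := Nat.div_mul_cancel hpn
  have hval : ∑ j ∈ Ico 1 n, (j : ZMod p) ^ m
      = ((n / p : ℕ) : ZMod p) * (if (p - 1) ∣ m then -1 else 0) := by
    have hb := sum_range_mul_pow p m (n / p)
    rw [hn', sum_range_pow_eq_univ, sum_univ_pow p m hm] at hb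
    rw [← hrange, hb]
  have hone : ((n / p : ℕ) : ZMod p) = 1 := by
    have : ((n / p - 1 : ℕ) : ZMod p) = 0 := (ZMod.natCast_eq_zero_iff _ _).2 hgiuga
    have heq : n / p = (n / p - 1) + 1 := by omega
    rw [heq]
    push_cast
    rw [this, zero_add]
  rw [hval, hone, one_mul]
  constructor
  · intro h
    by_contra hd
    rw [if_neg hd] at h
    have : (1 : ZMod p) = 0 := by
      have := congrArg Neg.neg h
      simpa using this.symm
    exact one_ne_zero this
  · intro h; rw [if_pos h]

/-- For squarefree `n ≥ 2`, all units have `u^m = 1` iff `p - 1 ∣ m` for all primes `p ∣ n`. -/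
private lemma forall_units_pow_iff {n m : ℕ} (h2 : 2 ≤ n) (hsq : Squarefree n) :
    (∀ u : (ZMod n)ˣ, u ^ m = 1) ↔ ∀ p ∈ n.primeFactors, (p - 1) ∣ m := by
  haveI : NeZero n := ⟨by omega⟩
  constructor
  · intro h p hp
    have pp := Nat.prime_of_mem_primeFactors hp
    have hpn := Nat.dvd_of_mem_primeFactors hp
    haveI : Fact p.Prime := ⟨pp⟩
    set q := n / p with hq
    have hmul : p * q = n := Nat.mul_div_cancel' hpn
    have hq0 : q ≠ 0 := by
      intro h0
      rw [h0, mul_zero] at hmul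
      omega
    haveI : NeZero q := ⟨hq0⟩
    have hnd : ¬ p ∣ q := fun hdvd =>
      Nat.squarefree_iff_prime_squarefree.mp hsq p pp
        (by rw [← hmul]; exact mul_dvd_mul_left p hdvd)
    have hco : Nat.Coprime p q := (Nat.Prime.coprime_iff_not_dvd pp).mpr hnd
    rw [← hmul] at h
    let F : ((ZMod (p * q))ˣ) ≃* ((ZMod p)ˣ × (ZMod q)ˣ) :=
      (Units.mapEquiv (ZMod.chineseRemainder hco).toMulEquiv).trans MulEquiv.prodUnits
    obtain ⟨g, hg⟩ := IsCyclic.exists_generator (α := (ZMod p)ˣ)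
    have horder : orderOf g = p - 1 := by
      rw [orderOf_eq_card_of_forall_mem_zpowers hg, Nat.card_eq_fintype_card,
        ZMod.card_units]
    have hgm : g ^ m = 1 := by
      have := h (F.symm (g, 1))
      have h2' := congrArg F this
      rw [← map_pow, MulEquiv.apply_symm_apply, map_one] at h2'
      have := congrArg Prod.fst h2'
      simpa using this
    rw [← horder]
    exact orderOf_dvd_of_pow_eq_one hgm
  · intro h u
    have hu : ∀ p ∈ n.primeFactors, ((u : ZMod n).val : ZMod p) ^ m = 1 := by
      intro p hp
      have pp := Nat.prime_of_mem_primeFactors hp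
      haveI : Fact p.Prime := ⟨pp⟩
      have hco : Nat.Coprime (u : ZMod n).val n := ZMod.val_coe_unit_coprime u
      have hpn := Nat.dvd_of_mem_primeFactors hp
      have hne : ((u : ZMod n).val : ZMod p) ≠ 0 := by
        rw [Ne, ZMod.natCast_eq_zero_iff]
        intro hdvd
        have h1 : p ∣ Nat.gcd (u : ZMod n).val n := Nat.dvd_gcd hdvd hpn
        rw [Nat.Coprime] at hco
        rw [hco] at h1
        exact pp.one_lt.ne' (Nat.dvd_one.mp h1)
      obtain ⟨c, hc⟩ := h p hp
      rw [hc, pow_mul, ZMod.pow_card_sub_one_eq_one hne, one_pow]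
    -- now conclude u^m = 1 in (ZMod n)ˣ
    set a := (u : ZMod n).val with ha
    have hane : a ≠ 0 := by
      intro h0
      have hco : Nat.Coprime a n := ZMod.val_coe_unit_coprime u
      rw [h0, Nat.coprime_zero_left] at hco
      omega
    have ha1 : 1 ≤ a ^ m := Nat.one_le_iff_ne_zero.2 (pow_ne_zero m hane)
    have hdvd : n ∣ a ^ m - 1 := by
      rw [squarefree_dvd_iff hsq]
      intro p hp
      haveI : Fact p.Prime := ⟨Nat.prime_of_mem_primeFactors hp⟩
      rw [← ZMod.natCast_eq_zero_iff]
      push_cast [Nat.cast_sub ha1]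
      rw [hu p hp]
      ring
    have : ((a ^ m - 1 : ℕ) : ZMod n) = 0 := (ZMod.natCast_eq_zero_iff _ _).2 hdvd
    have hpow : ((u : ZMod n)) ^ m = 1 := by
      have := this
      rw [Nat.cast_sub ha1] at this
      push_cast at this
      have h1 : ((a : ZMod n)) ^ m = 1 := by linear_combination this
      rw [← ZMod.natCast_zmod_val (u : ZMod n)] at *
      exact h1
    ext
    rw [Units.val_pow_eq_pow_val, hpow, Units.val_one]

theorem giuga_kSet (n : ℕ) (hn : IsGiuga n) :
    ∀ k : ℕ, 0 < k →
      ((∑ j ∈ Finset.Ico 1 n, (j : ZMod n) ^ (k * (n - 1)) = -1) ↔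
        ∃ t : ℕ, 0 < t ∧ k = t * (carmichael n / Nat.gcd (carmichael n) (n - 1))) := by
  obtain ⟨⟨h2, -⟩, hg⟩ := hn
  haveI : NeZero n := ⟨by omega⟩
  have hsq : Squarefree n := giuga_squarefree h2 hg
  intro k hk
  set m := k * (n - 1) with hm
  have hm0 : 0 < m := Nat.mul_pos hk (by omega)
  -- Step 1: the sum condition ↔ ∀ p, (p-1) ∣ m
  have step1 : (∑ j ∈ Finset.Ico 1 n, (j : ZMod n) ^ m = -1)
      ↔ ∀ p ∈ n.primeFactors, (p - 1) ∣ m := by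
    -- reduce to nat divisibility
    set S : ℕ := ∑ j ∈ Finset.Ico 1 n, j ^ m with hS
    have hcastn : (∑ j ∈ Finset.Ico 1 n, (j : ZMod n) ^ m) = ((S : ℕ) : ZMod n) := by
      push_cast [hS]; rfl
    have hiff : (∑ j ∈ Finset.Ico 1 n, (j : ZMod n) ^ m = -1) ↔ n ∣ S + 1 := by
      rw [hcastn, ← ZMod.natCast_eq_zero_iff]
      push_cast
      constructor
      · intro h; rw [h]; ring
      · intro h; linear_combination h
    rw [hiff, squarefree_dvd_iff hsq]
    apply forall_congr'
    intro p
    apply imp_congr_right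
    intro hp
    have pp := Nat.prime_of_mem_primeFactors hp
    have hpn := Nat.dvd_of_mem_primeFactors hp
    haveI : Fact p.Prime := ⟨pp⟩
    have hcastp : ((S : ℕ) : ZMod p) = ∑ j ∈ Finset.Ico 1 n, (j : ZMod p) ^ m := by
      push_cast [hS]; rfl
    have : p ∣ S + 1 ↔ (∑ j ∈ Finset.Ico 1 n, (j : ZMod p) ^ m = -1) := by
      rw [← ZMod.natCast_eq_zero_iff, ← hcastp]
      push_cast
      constructor
      · intro h; linear_combination h
      · intro h; rw [h]; ring
    rw [this, sum_mod_prime h2 pp hpn hm0 (hg p pp hpn)]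
  -- Step 2: ∀ p, (p-1) ∣ m ↔ carmichael n ∣ m
  have step2 : (∀ p ∈ n.primeFactors, (p - 1) ∣ m) ↔ carmichael n ∣ m := by
    rw [carmichael, Monoid.exponent_dvd_iff_forall_pow_eq_one,
      forall_units_pow_iff h2 hsq]
  -- Step 3: carmichael n ∣ k * (n-1) ↔ ∃ t > 0, k = t * (L / gcd L (n-1))
  set L := carmichael n with hL
  have hL0 : 0 < L := Monoid.ExponentExists.exponent_pos Monoid.ExponentExists.of_finite
  set g := Nat.gcd L (n - 1) with hgcd
  have hg0 : 0 < g := Nat.gcd_pos_of_pos_left _ hL0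
  set a := L / g with haa
  have ha0 : 0 < a := Nat.div_pos (Nat.le_of_dvd hL0 (Nat.gcd_dvd_left _ _)) hg0
  have hLa : a * g = L := Nat.div_mul_cancel (Nat.gcd_dvd_left _ _)
  have hbb : (n - 1) / g * g = n - 1 := Nat.div_mul_cancel (Nat.gcd_dvd_right _ _)
  have hcop : Nat.Coprime a ((n - 1) / g) := Nat.coprime_div_gcd_div_gcd hg0
  have step3 : L ∣ m ↔ ∃ t : ℕ, 0 < t ∧ k = t * a := by
    constructor
    · intro h
      have h1 : a * g ∣ k * ((n - 1) / g) * g := by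
        rw [hLa, mul_assoc, hbb]; exact h
      have h2' : a ∣ k * ((n - 1) / g) :=
        (Nat.mul_dvd_mul_iff_right hg0).1 h1
      have h3 : a ∣ k := hcop.dvd_of_dvd_mul_right h2'
      obtain ⟨t, ht⟩ := h3
      have ht0 : 0 < t := by
        rcases Nat.eq_zero_or_pos t with h0 | h0
        · subst h0; simp at ht; omega
        · exact h0
      exact ⟨t, ht0, by rw [ht, mul_comm]⟩
    · rintro ⟨t, ht, rfl⟩
      rw [hm]
      obtain ⟨b, hb⟩ : g ∣ n - 1 := Nat.gcd_dvd_right _ _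
      rw [hb, ← hLa]
      exact ⟨t * b, by ring⟩
  rw [step1, step2, step3]
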